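/- Let G be a group whose commutator subgroup ⁅G, G⁆ is contained in the center of G and is finite with exactly n elements, and let m = 2n. Then for all a, b ∈ G one has (ab)^m = a^m · b^m and a^m · b^m = b^m · a^m; consequently the set {a^m : a ∈ G} is an abelian subgroup of G. -/

import Mathlib

section Aux

variable {G : Type*} [Group G]

lemma aux_central_pow (c : G) (hc : ∀ x : G, c * x = x * c) (t : ℕ) (x : G) :
    c ^ t * x = x * c ^ t :=
  ((Commute.pow_left (a := c) (b := x) (hc x) t)).eq

lemma aux_pow_one (a b c : G) (hc : ∀ x : G, c * x = x * c)
    (h : b * a = c * (a * b)) : ∀ j : ℕ, b ^ j * a = c ^ j * (a * b ^ j) := by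
  intro j
  induction j with
  | zero => simp
  | succ j ih =>
    calc b ^ (j + 1) * a = b ^ j * (b * a) := by rw [pow_succ, mul_assoc]
      _ = b ^ j * (c * (a * b)) := by rw [h]
      _ = c * (b ^ j * a * b) := by
          rw [← mul_assoc, ← hc (b ^ j), mul_assoc, mul_assoc]
      _ = c * (c ^ j * (a * b ^ j) * b) := by rw [ih]
      _ = c ^ (j + 1) * (a * b ^ (j + 1)) := by
          rw [pow_succ c, pow_succ b]
          simp only [← mul_assoc]
          rw [hc (c ^ j)]

lemma aux_pow_pow (a b c : G) (hc : ∀ x : G, c * x = x * c)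
    (h : b * a = c * (a * b)) (j : ℕ) :
    ∀ k : ℕ, b ^ j * a ^ k = c ^ (j * k) * (a ^ k * b ^ j) := by
  intro k
  induction k with
  | zero => simp
  | succ k ih =>
    calc b ^ j * a ^ (k + 1) = b ^ j * a ^ k * a := by rw [pow_succ, mul_assoc]
      _ = c ^ (j * k) * (a ^ k * (b ^ j * a)) := by rw [ih]; simp [mul_assoc]
      _ = c ^ (j * k) * (a ^ k * (c ^ j * (a * b ^ j))) := by
          rw [aux_pow_one a b c hc h]
      _ = c ^ (j * k) * c ^ j * (a ^ k * (a * b ^ j)) := by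
          rw [← mul_assoc (a ^ k), ← aux_central_pow c hc j (a ^ k)]
          simp [mul_assoc]
      _ = c ^ (j * (k + 1)) * (a ^ (k + 1) * b ^ j) := by
          rw [Nat.mul_succ, pow_add, pow_succ a]
          simp only [mul_assoc]

lemma aux_mul_pow (a b c : G) (hc : ∀ x : G, c * x = x * c)
    (h : b * a = c * (a * b)) :
    ∀ k : ℕ, (a * b) ^ k = c ^ (k.choose 2) * (a ^ k * b ^ k) := by
  intro k
  induction k with
  | zero => simp
  | succ k ih =>
    calc (a * b) ^ (k + 1) = (a * b) ^ k * (a * b) := by rw [pow_succ]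
      _ = c ^ (k.choose 2) * (a ^ k * (b ^ k * a) * b) := by rw [ih]; simp [mul_assoc]
      _ = c ^ (k.choose 2) * (a ^ k * (c ^ k * (a * b ^ k)) * b) := by
          rw [aux_pow_one a b c hc h]
      _ = c ^ (k.choose 2) * c ^ k * (a ^ k * (a * b ^ k) * b) := by
          rw [← mul_assoc (a ^ k), ← aux_central_pow c hc k (a ^ k)]
          simp only [mul_assoc]
      _ = c ^ ((k + 1).choose 2) * (a ^ (k + 1) * b ^ (k + 1)) := by
          have hck : (k + 1).choose 2 = k.choose 2 + k := by
            rw [Nat.choose_succ_succ]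
            simp [Nat.add_comm]
          rw [hck, pow_add, pow_succ a, pow_succ b]
          simp only [mul_assoc]

end Aux

open scoped commutatorElement

/-- if the commutator subgroup of G lies in the center and has
exactly n elements, and m = 2n, then (ab)^m = a^m b^m, powers a^m and b^m
commute, and {a^m : a ∈ G} is an abelian subgroup of G. -/
theorem stmt11 (G : Type*) [Group G] (n : ℕ) (hn : 0 < n)
    (hcen : commutator G ≤ Subgroup.center G)
    (hcard : Nat.card (commutator G) = n) (m : ℕ) (hm : m = 2 * n) :
    (∀ a b : G, (a * b) ^ m = a ^ m * b ^ m) ∧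
    (∀ a b : G, a ^ m * b ^ m = b ^ m * a ^ m) ∧
    ∃ H : Subgroup G, (H : Set G) = Set.range (fun a : G => a ^ m) ∧
      ∀ x ∈ H, ∀ y ∈ H, x * y = y * x := by
  have hmem : ∀ g h : G, ⁅g, h⁆ ∈ commutator G := fun g h =>
    Subgroup.commutator_mem_commutator (Subgroup.mem_top g) (Subgroup.mem_top h)
  have hcomm : ∀ g h x : G, ⁅g, h⁆ * x = x * ⁅g, h⁆ := fun g h x =>
    (Subgroup.mem_center_iff.mp (hcen (hmem g h)) x).symm
  have hfin : Finite (commutator G) := Nat.finite_of_card_ne_zero (by omega)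
  have hpow : ∀ g h : G, ⁅g, h⁆ ^ n = 1 := by
    intro g h
    have h1 := pow_card_eq_one' (G := commutator G) (x := ⟨⁅g, h⁆, hmem g h⟩)
    rw [hcard] at h1
    exact_mod_cast congrArg (Subgroup.subtype _) h1
  have hba : ∀ a b : G, b * a = ⁅b, a⁆ * (a * b) := by intro a b; group
  -- first part
  have part1 : ∀ a b : G, (a * b) ^ m = a ^ m * b ^ m := by
    intro a b
    have := aux_mul_pow a b ⁅b, a⁆ (hcomm b a) (hba a b) m
    have hch : ⁅b, a⁆ ^ (m.choose 2) = 1 := by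
      have : m.choose 2 = n * (2 * n - 1) := by
        rw [Nat.choose_two_right, hm, mul_assoc,
          Nat.mul_div_cancel_left _ (by norm_num : 0 < 2)]
      rw [this, pow_mul, hpow, one_pow]
    rw [this, hch, one_mul]
  have part2 : ∀ a b : G, a ^ m * b ^ m = b ^ m * a ^ m := by
    intro a b
    have h1 := aux_pow_pow a b ⁅b, a⁆ (hcomm b a) (hba a b) m m
    have h2 : ⁅b, a⁆ ^ (m * m) = 1 := by
      have : m * m = n * (4 * n) := by rw [hm]; ring
      rw [this, pow_mul, hpow, one_pow]
    rw [h2, one_mul] at h1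
    exact h1.symm
  refine ⟨part1, part2, ⟨{
    carrier := Set.range (fun a : G => a ^ m)
    one_mem' := ⟨1, one_pow m⟩
    mul_mem' := by
      rintro x y ⟨a, rfl⟩ ⟨b, rfl⟩
      exact ⟨a * b, part1 a b⟩
    inv_mem' := by
      rintro x ⟨a, rfl⟩
      exact ⟨a⁻¹, by simp⟩ }, rfl, ?_⟩⟩
  rintro x ⟨a, rfl⟩ y ⟨b, rfl⟩
  exact part2 a b
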